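/- Let r be a positive integer. For every vertex v = (i,j) of the hexagonal grid there is exactly one integer n such that d(v, L_{n(r+1)}) ≤ r, where L_k = {(x,k) : x ∈ ℤ}. -/

import Mathlib

/-- The hexagonal grid in its brick wall representation: vertex set ℤ×ℤ,
with (x,y) adjacent to (x±1,y) always, and to (x,y+1) if x+y is even
(equivalently, to (x,y-1) if x+y is odd). -/
def hexGraph : SimpleGraph (ℤ × ℤ) where
  Adj u v := (u.2 = v.2 ∧ (u.1 = v.1 + 1 ∨ v.1 = u.1 + 1)) ∨
    (u.1 = v.1 ∧ ((v.2 = u.2 + 1 ∧ Even (u.1 + u.2)) ∨ (u.2 = v.2 + 1 ∧ Even (v.1 + v.2))))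
  symm := by
    refine ⟨?_⟩
    rintro u v (⟨h1, h2 | h2⟩ | ⟨h1, ⟨h2, h3⟩ | ⟨h2, h3⟩⟩)
    · exact Or.inl ⟨h1.symm, Or.inr h2⟩
    · exact Or.inl ⟨h1.symm, Or.inl h2⟩
    · exact Or.inr ⟨h1.symm, Or.inr ⟨h2, h3⟩⟩
    · exact Or.inr ⟨h1.symm, Or.inl ⟨h2, h3⟩⟩
  loopless := by refine ⟨?_⟩; rintro ⟨x, y⟩ (⟨_, h | h⟩ | ⟨_, ⟨h, _⟩ | ⟨h, _⟩⟩) <;> omega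

/-- The graph distance from a vertex to the horizontal line L_k = {(x,k) : x ∈ ℤ}. -/
noncomputable def hexLineDist (u : ℤ × ℤ) (k : ℤ) : ℕ :=
  sInf {n : ℕ | ∃ x : ℤ, hexGraph.dist u (x, k) = n}

namespace HexAux

/-- A 1-Lipschitz potential function on the hex grid. -/
def f (u : ℤ × ℤ) : ℤ := 2 * u.2 - (u.1 + u.2) % 2

lemma adj_right (x y : ℤ) : hexGraph.Adj (x, y) (x + 1, y) :=
  Or.inl ⟨rfl, Or.inr rfl⟩

lemma adj_up (x y : ℤ) (h : Even (x + y)) : hexGraph.Adj (x, y) (x, y + 1) :=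
  Or.inr ⟨rfl, Or.inl ⟨rfl, h⟩⟩

lemma adj_down (x y : ℤ) (h : Odd (x + y)) : hexGraph.Adj (x, y) (x, y - 1) := by
  refine Or.inr ⟨rfl, Or.inr ⟨?_, ?_⟩⟩
  · show y = y - 1 + 1; ring
  · show Even (x + (y - 1))
    rw [Int.even_iff]; rw [Int.odd_iff] at h; omega

lemma f_adj {u v : ℤ × ℤ} (h : hexGraph.Adj u v) : |f u - f v| ≤ 1 := by
  obtain ⟨a, b⟩ := u; obtain ⟨c, d⟩ := v
  have hf1 : f (a, b) = 2 * b - (a + b) % 2 := rfl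
  have hf2 : f (c, d) = 2 * d - (c + d) % 2 := rfl
  rw [hf1, hf2, abs_le]
  rcases h with ⟨h1, h2 | h2⟩ | ⟨h1, ⟨h2, h3⟩ | ⟨h2, h3⟩⟩ <;>
    simp only [Int.even_iff] at * <;> constructor <;> omega

lemma walk_bound {u v : ℤ × ℤ} (w : hexGraph.Walk u v) : |f u - f v| ≤ (w.length : ℤ) := by
  induction w with
  | nil => simp
  | @cons a b c h p ih =>
    have h1 := f_adj h
    have h2 := abs_sub_le (f a) (f b) (f c)
    rw [SimpleGraph.Walk.length_cons]
    push_cast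
    linarith

lemma lineDist_le {u : ℤ × ℤ} {k : ℤ} {B : ℕ} (x : ℤ) (w : hexGraph.Walk u (x, k))
    (hw : w.length ≤ B) : hexLineDist u k ≤ B :=
  le_trans (Nat.sInf_le ⟨x, rfl⟩) (le_trans (hexGraph.dist_le w) hw)

lemma lineDist_mem (u : ℤ × ℤ) (k : ℤ) :
    ∃ x : ℤ, hexGraph.dist u (x, k) = hexLineDist u k := by
  have hne : {n : ℕ | ∃ x : ℤ, hexGraph.dist u (x, k) = n}.Nonempty := ⟨_, 0, rfl⟩
  exact Nat.sInf_mem hne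

lemma walk_up_even : ∀ (m : ℕ) (x y : ℤ), Even (x + y) →
    ∃ x' : ℤ, ∃ w : hexGraph.Walk (x, y) (x', y + (m : ℤ)), w.length ≤ 2 * m - 1 := by
  intro m
  induction m with
  | zero => exact fun x y _ => ⟨x, SimpleGraph.Walk.nil.copy rfl (by norm_num), by simp⟩
  | succ m ih =>
    intro x y h
    rcases Nat.eq_zero_or_pos m with hm | hm
    · subst hm
      refine ⟨x, (SimpleGraph.Walk.cons (adj_up x y h) SimpleGraph.Walk.nil).copy rfl
        (by norm_num), ?_⟩
      rw [SimpleGraph.Walk.length_copy]; simp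
    · have h2 : Even ((x + 1) + (y + 1)) := by rw [Int.even_iff] at h ⊢; omega
      obtain ⟨x', w, hw⟩ := ih (x + 1) (y + 1) h2
      refine ⟨x', (SimpleGraph.Walk.cons (adj_up x y h)
        (SimpleGraph.Walk.cons (adj_right x (y + 1)) w)).copy rfl ?_, ?_⟩
      · simp only [Prod.mk.injEq]; exact ⟨trivial, by push_cast; ring⟩
      · rw [SimpleGraph.Walk.length_copy]
        simp only [SimpleGraph.Walk.length_cons]; omega

lemma walk_down_odd : ∀ (m : ℕ) (x y : ℤ), Odd (x + y) →
    ∃ x' : ℤ, ∃ w : hexGraph.Walk (x, y) (x', y - (m : ℤ)), w.length ≤ 2 * m - 1 := by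
  intro m
  induction m with
  | zero => exact fun x y _ => ⟨x, SimpleGraph.Walk.nil.copy rfl (by norm_num), by simp⟩
  | succ m ih =>
    intro x y h
    rcases Nat.eq_zero_or_pos m with hm | hm
    · subst hm
      refine ⟨x, (SimpleGraph.Walk.cons (adj_down x y h) SimpleGraph.Walk.nil).copy rfl
        (by norm_num), ?_⟩
      rw [SimpleGraph.Walk.length_copy]; simp
    · have h2 : Odd ((x + 1) + (y - 1)) := by rw [Int.odd_iff] at h ⊢; omega
      obtain ⟨x', w, hw⟩ := ih (x + 1) (y - 1) h2
      refine ⟨x', (SimpleGraph.Walk.cons (adj_down x y h)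
        (SimpleGraph.Walk.cons (adj_right x (y - 1)) w)).copy rfl ?_, ?_⟩
      · simp only [Prod.mk.injEq]; exact ⟨trivial, by push_cast; ring⟩
      · rw [SimpleGraph.Walk.length_copy]
        simp only [SimpleGraph.Walk.length_cons]; omega

lemma walk_up_any (m : ℕ) (x y : ℤ) :
    ∃ x' : ℤ, ∃ w : hexGraph.Walk (x, y) (x', y + (m : ℤ)), w.length ≤ 2 * m := by
  rcases Nat.eq_zero_or_pos m with hm | hm
  · subst hm; exact ⟨x, SimpleGraph.Walk.nil.copy rfl (by norm_num), by simp⟩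
  by_cases h : Even (x + y)
  · obtain ⟨x', w, hw⟩ := walk_up_even m x y h
    exact ⟨x', w, by omega⟩
  · have h2 : Even ((x + 1) + y) := by rw [Int.even_iff] at h ⊢; omega
    obtain ⟨x', w, hw⟩ := walk_up_even m (x + 1) y h2
    exact ⟨x', SimpleGraph.Walk.cons (adj_right x y) w, by
      simp only [SimpleGraph.Walk.length_cons]; omega⟩

lemma walk_down_any (m : ℕ) (x y : ℤ) :
    ∃ x' : ℤ, ∃ w : hexGraph.Walk (x, y) (x', y - (m : ℤ)), w.length ≤ 2 * m := by
  rcases Nat.eq_zero_or_pos m with hm | hm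
  · subst hm; exact ⟨x, SimpleGraph.Walk.nil.copy rfl (by norm_num), by simp⟩
  by_cases h : Odd (x + y)
  · obtain ⟨x', w, hw⟩ := walk_down_odd m x y h
    exact ⟨x', w, by omega⟩
  · have h2 : Odd ((x + 1) + y) := by rw [Int.odd_iff] at h ⊢; omega
    obtain ⟨x', w, hw⟩ := walk_down_odd m (x + 1) y h2
    exact ⟨x', SimpleGraph.Walk.cons (adj_right x y) w, by
      simp only [SimpleGraph.Walk.length_cons]; omega⟩

lemma reach_right : ∀ (d : ℕ) (x y : ℤ), hexGraph.Reachable (x, y) (x + (d : ℤ), y) := by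
  intro d
  induction d with
  | zero => intro x y; rw [show x + ((0 : ℕ) : ℤ) = x by simp]
  | succ d ih =>
    intro x y
    have h2 := (adj_right (x + (d : ℤ)) y).reachable
    rw [show x + (d : ℤ) + 1 = x + ((d + 1 : ℕ) : ℤ) by push_cast; ring] at h2
    exact (ih x y).trans h2

lemma reach_horiz (x x' y : ℤ) : hexGraph.Reachable (x, y) (x', y) := by
  rcases le_total x x' with h | h
  · have h1 := reach_right (x' - x).toNat x y
    rwa [show x + ((x' - x).toNat : ℤ) = x' by omega] at h1
  · have h1 := reach_right (x - x').toNat x' y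
    rw [show x' + ((x - x').toNat : ℤ) = x by omega] at h1
    exact h1.symm

lemma reach_all (a b x k : ℤ) : hexGraph.Reachable (a, b) (x, k) := by
  rcases le_total b k with h | h
  · obtain ⟨x', w, _⟩ := walk_up_any (k - b).toNat a b
    have h1 : hexGraph.Reachable (a, b) (x', b + ((k - b).toNat : ℤ)) := ⟨w⟩
    rw [show b + ((k - b).toNat : ℤ) = k by omega] at h1
    exact h1.trans (reach_horiz x' x k)
  · obtain ⟨x', w, _⟩ := walk_down_any (b - k).toNat a b
    have h1 : hexGraph.Reachable (a, b) (x', b - ((b - k).toNat : ℤ)) := ⟨w⟩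
    rw [show b - ((b - k).toNat : ℤ) = k by omega] at h1
    exact h1.trans (reach_horiz x' x k)

lemma key (r : ℕ) (i j k : ℤ) :
    hexLineDist (i, j) k ≤ r ↔
      2 * (j - k) ≤ (r : ℤ) + (i + j) % 2 ∧ 2 * (k - j) ≤ (r : ℤ) + 1 - (i + j) % 2 := by
  constructor
  · intro hd
    obtain ⟨x, hx⟩ := lineDist_mem (i, j) k
    obtain ⟨w, hw⟩ := (reach_all i j x k).exists_walk_length_eq_dist
    have hb := walk_bound w
    rw [hw, hx] at hb
    have hf1 : f (i, j) = 2 * j - (i + j) % 2 := rfl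
    have hf2 : f (x, k) = 2 * k - (x + k) % 2 := rfl
    rw [hf1, hf2] at hb
    have h1 := le_trans (le_abs_self _) hb
    have h2 := le_trans (neg_le_abs _) hb
    constructor <;> omega
  · rintro ⟨h1, h2⟩
    rcases lt_trichotomy j k with h | h | h
    · by_cases he : Even (i + j)
      · obtain ⟨x', w, hw⟩ := walk_up_even (k - j).toNat i j he
        refine lineDist_le x'
          (w.copy rfl (by simp only [Prod.mk.injEq]; exact ⟨trivial, by omega⟩)) ?_
        rw [SimpleGraph.Walk.length_copy]
        rw [Int.even_iff] at he
        omega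
      · obtain ⟨x', w, hw⟩ := walk_up_any (k - j).toNat i j
        refine lineDist_le x'
          (w.copy rfl (by simp only [Prod.mk.injEq]; exact ⟨trivial, by omega⟩)) ?_
        rw [SimpleGraph.Walk.length_copy]
        rw [Int.even_iff] at he
        omega
    · subst h
      exact lineDist_le i SimpleGraph.Walk.nil (by simp)
    · by_cases he : Even (i + j)
      · obtain ⟨x', w, hw⟩ := walk_down_any (j - k).toNat i j
        refine lineDist_le x'
          (w.copy rfl (by simp only [Prod.mk.injEq]; exact ⟨trivial, by omega⟩)) ?_
        rw [SimpleGraph.Walk.length_copy]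
        rw [Int.even_iff] at he
        omega
      · have ho : Odd (i + j) := Int.not_even_iff_odd.mp he
        obtain ⟨x', w, hw⟩ := walk_down_odd (j - k).toNat i j ho
        refine lineDist_le x'
          (w.copy rfl (by simp only [Prod.mk.injEq]; exact ⟨trivial, by omega⟩)) ?_
        rw [SimpleGraph.Walk.length_copy]
        rw [Int.even_iff] at he
        omega

end HexAux

/-- every vertex is within distance r of exactly one of the
horizontal lines L_{n(r+1)}. -/
theorem hex_unique_nearby_line (r : ℕ) (hr : 0 < r) (i j : ℤ) :
    ∃! n : ℤ, hexLineDist (i, j) (n * ((r : ℤ) + 1)) ≤ r := by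
  have key' : ∀ n : ℤ, hexLineDist (i, j) (n * ((r : ℤ) + 1)) ≤ r ↔
      2 * (j - n * ((r : ℤ) + 1)) ≤ (r : ℤ) + (i + j) % 2 ∧
        2 * (n * ((r : ℤ) + 1) - j) ≤ (r : ℤ) + 1 - (i + j) % 2 :=
    fun n => HexAux.key r i j _
  set e := (i + j) % 2 with he
  have he0 : 0 ≤ e := Int.emod_nonneg _ (by norm_num)
  have he1 : e < 2 := Int.emod_lt_of_pos _ (by norm_num)
  set R : ℤ := (r : ℤ) + 1 with hR
  have hRpos : 0 < R := by positivity
  set q : ℤ := (2 * j + R - e) / (2 * R) with hq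
  have hdm : 2 * R * q + (2 * j + R - e) % (2 * R) = 2 * j + R - e := by
    rw [hq]; exact Int.mul_ediv_add_emod _ _
  have ht0 : 0 ≤ (2 * j + R - e) % (2 * R) := Int.emod_nonneg _ (by positivity)
  have ht1 : (2 * j + R - e) % (2 * R) < 2 * R := Int.emod_lt_of_pos _ (by positivity)
  set t := (2 * j + R - e) % (2 * R) with htt
  have hqprop : 2 * (j - q * R) ≤ (r : ℤ) + e ∧ 2 * (q * R - j) ≤ (r : ℤ) + 1 - e := by
    constructor <;> nlinarith [hdm, ht0, ht1, hR]
  refine ⟨q, (key' q).2 hqprop, fun y hy => ?_⟩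
  have h1 := (key' y).1 hy
  by_contra hne
  rcases lt_or_gt_of_ne hne with hlt | hgt
  · have hm : R ≤ (q - y) * R := le_mul_of_one_le_left hRpos.le (by omega)
    nlinarith [h1.1, hqprop.2, hm]
  · have hm : R ≤ (y - q) * R := le_mul_of_one_le_left hRpos.le (by omega)
    nlinarith [h1.2, hqprop.1, hm]
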